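/- Let d, N ≥ 2 and let V = {v_1, …, v_n} ⊆ ℤ^d be a nonempty set of points in convex position with ‖v_i‖_∞ ≤ N for all i. Let P := conv(V), X := P ∩ ℤ^d, and Δ := ((d+1)N)^d. Suppose there exist an integer m×d matrix A and integer vector b ∈ ℤ^m with ‖A‖_∞, ‖b‖_∞ ≤ Δ and {x ∈ ℝ^d : Ax ≤ b} = P, together with an entrywise nonnegative m×r matrix T and an entrywise nonnegative r×n matrix U satisfying (TU)_{ij} = b_i − A_i·v_j for all i, j. Then there exist an integer (d+r)×d matrix Ā, a (d+r)×r matrix T̄ all of whose entries are nonnegative integer multiples of 1/(4r(d+r)Δ), and an integer vector b̄ ∈ ℤ^{d+r}, with ‖Ā‖_∞, ‖b̄‖_∞, ‖T̄‖_∞ ≤ Δ, such that X = { x ∈ ℤ^d : ∃ y ∈ [0,Δ]^r with ‖Āx + T̄y − b̄‖_∞ ≤ 1/(4(d+r)) }. -/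

import Mathlib

open Matrix

/-- Every row of `W` is a combination, with coefficients bounded by `1` in absolute
value, of at most `Fintype.card ι` chosen rows of `W`. -/
theorem exists_bounded_row_comb {m' : ℕ} {ι : Type} [Fintype ι] [DecidableEq ι]
    (W : Matrix (Fin m') ι ℝ) :
    ∃ (k : ℕ), k ≤ Fintype.card ι ∧ ∃ (ρ : Fin k → Fin m') (c : Fin m' → Fin k → ℝ),
      (∀ a j, |c a j| ≤ 1) ∧ ∀ a p, W a p = ∑ j, c a j * W (ρ j) p := by
  classical
  set P : ℕ → Prop := fun k =>
    ∃ (ρ : Fin k ↪ Fin m') (γ : Fin k ↪ ι), (W.submatrix ρ γ).det ≠ 0 with hPdef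
  have hP0 : P 0 := by
    refine ⟨⟨Fin.elim0, fun a => a.elim0⟩, ⟨Fin.elim0, fun a => a.elim0⟩, ?_⟩
    rw [Matrix.det_fin_zero]; exact one_ne_zero
  set k : ℕ := Nat.findGreatest P (Fintype.card ι) with hkdef
  have hPk : P k := Nat.findGreatest_spec (Nat.zero_le _) hP0
  have hkle : k ≤ Fintype.card ι := Nat.findGreatest_le _
  have hmax : ∀ (ρ' : Fin (k+1) ↪ Fin m') (γ' : Fin (k+1) ↪ ι),
      (W.submatrix ρ' γ').det = 0 := by
    intro ρ' γ'
    by_contra h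
    have hcard : k + 1 ≤ Fintype.card ι := by
      simpa using Fintype.card_le_of_embedding γ'
    exact Nat.findGreatest_is_greatest (Nat.lt_succ_self k) hcard ⟨ρ', γ', h⟩
  -- pick the pair of embeddings maximizing |det|
  have : Nonempty ((Fin k ↪ Fin m') × (Fin k ↪ ι)) := by
    obtain ⟨ρ₀, γ₀, -⟩ := hPk; exact ⟨⟨ρ₀, γ₀⟩⟩
  obtain ⟨⟨ρ, γ⟩, hopt⟩ :=
    Finite.exists_max (fun pr : (Fin k ↪ Fin m') × (Fin k ↪ ι) =>
      |(W.submatrix pr.1 pr.2).det|)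
  set B : Matrix (Fin k) (Fin k) ℝ := W.submatrix ρ γ with hBdef
  have hBdet : B.det ≠ 0 := by
    obtain ⟨ρ₀, γ₀, h₀⟩ := hPk
    have := hopt ⟨ρ₀, γ₀⟩
    intro h
    rw [hBdef] at h
    simp only [h, abs_zero] at this
    rw [h, abs_zero] at this
    exact h₀ (abs_eq_zero.mp (le_antisymm this (abs_nonneg _)))
  have hBunit : IsUnit B.det := isUnit_iff_ne_zero.mpr hBdet
  set c : Fin m' → Fin k → ℝ :=
    fun a j => Matrix.cramer Bᵀ (fun j' => W a (γ j')) j / B.det with hcdef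
  -- the combination identity on the chosen columns
  have hC : ∀ a (p' : Fin k), ∑ j, c a j * B j p' = W a (γ p') := by
    intro a p'
    have h := Matrix.mulVec_cramer Bᵀ (fun j' => W a (γ j'))
    have h2 := congrFun h p'
    simp only [Matrix.mulVec, dotProduct, Matrix.transpose_apply,
      Pi.smul_apply, smul_eq_mul, Matrix.det_transpose] at h2
    rw [hcdef]
    have : ∑ j, Matrix.cramer Bᵀ (fun j' => W a (γ j')) j / B.det * B j p'
        = (∑ j, Bᵀ p' j * Matrix.cramer Bᵀ (fun j' => W a (γ j')) j) / B.det := by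
      rw [Finset.sum_div]
      refine Finset.sum_congr rfl fun j _ => ?_
      rw [Matrix.transpose_apply]; ring
    rw [this]
    simp only [Matrix.transpose_apply]
    rw [h2]
    field_simp
  have habs : ∀ a j, |c a j| ≤ 1 := by
    intro a j
    have hcram : Matrix.cramer Bᵀ (fun j' => W a (γ j')) j
        = (B.updateRow j fun j' => W a (γ j')).det := by
      rw [Matrix.cramer_apply, Matrix.updateCol_transpose, Matrix.det_transpose]
    have hdetle : |(B.updateRow j fun j' => W a (γ j')).det| ≤ |B.det| := by
      by_cases ha : ∃ j', ρ j' = a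
      · obtain ⟨j', hj'⟩ := ha
        by_cases hjj : j' = j
        · subst hjj
          have : (B.updateRow j' fun p => W a (γ p)) = B := by
            have : (fun p => W a (γ p)) = B j' := by
              funext p; rw [hBdef, Matrix.submatrix_apply, hj']
            rw [this, Matrix.updateRow_eq_self]
          rw [this]
        · have : (B.updateRow j fun p => W a (γ p)).det = 0 := by
            apply Matrix.det_zero_of_row_eq hjj
            rw [Matrix.updateRow_ne hjj, Matrix.updateRow_self]
            funext p
            rw [hBdef, Matrix.submatrix_apply, hj']
          rw [this, abs_zero]; exact abs_nonneg _
      · push_neg at ha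
        set ρ'' : Fin k → Fin m' := Function.update ρ j a with hρ''
        have hinj : Function.Injective ρ'' := by
          intro u v huv
          rw [hρ''] at huv
          by_cases hu : u = j <;> by_cases hv : v = j
          · rw [hu, hv]
          · rw [Function.update_apply, if_pos hu, Function.update_apply, if_neg hv] at huv
            exact absurd huv.symm (ha v)
          · rw [Function.update_apply, if_neg hu, Function.update_apply, if_pos hv] at huv
            exact absurd huv (ha u)
          · rw [Function.update_apply, if_neg hu, Function.update_apply, if_neg hv] at huv
            exact ρ.injective huv
        have heq : B.updateRow j (fun p => W a (γ p)) = W.submatrix ρ'' γ := by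
          ext j' p
          by_cases hj' : j' = j
          · subst hj'
            rw [Matrix.updateRow_apply, if_pos rfl, Matrix.submatrix_apply, hρ'',
              Function.update_apply, if_pos rfl]
          · rw [Matrix.updateRow_apply, if_neg hj', hBdef, Matrix.submatrix_apply,
              Matrix.submatrix_apply, hρ'', Function.update_apply, if_neg hj']
        rw [heq]
        exact hopt ⟨⟨ρ'', hinj⟩, γ⟩
    rw [hcdef, abs_div, hcram]
    rw [div_le_one (abs_pos.mpr hBdet)]
    exact hdetle
  refine ⟨k, hkle, ρ, c, habs, ?_⟩
  intro a p
  by_cases hp : ∃ p', γ p' = p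
  · obtain ⟨p', rfl⟩ := hp
    have := hC a p'
    rw [hBdef] at this
    simp only [Matrix.submatrix_apply] at this
    exact this.symm
  · push_neg at hp
    -- Schur complement argument
    set u : Fin k → ℝ := fun j => W (ρ j) p with hu
    set Bc : Matrix (Fin k) (Fin 1) ℝ := fun j _ => u j with hBc
    set Cc : Matrix (Fin 1) (Fin k) ℝ := fun _ j' => W a (γ j') with hCc
    set Dc : Matrix (Fin 1) (Fin 1) ℝ := fun _ _ => W a p with hDc
    set M : Matrix (Fin k ⊕ Fin 1) (Fin k ⊕ Fin 1) ℝ := Matrix.fromBlocks B Bc Cc Dc with hM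
    have hMdet : M.det = 0 := by
      by_cases ha : ∃ j₀, ρ j₀ = a
      · obtain ⟨j₀, hj₀⟩ := ha
        apply Matrix.det_zero_of_row_eq (i := Sum.inl j₀) (j := Sum.inr 0) (by simp)
        funext q
        cases q with
        | inl q =>
          simp only [hM, Matrix.fromBlocks_apply₁₁, Matrix.fromBlocks_apply₂₁, hBdef,
            Matrix.submatrix_apply, hCc, hj₀, Matrix.fromBlocks, Matrix.of_apply, Sum.elim_inl,
            Sum.elim_inr]
        | inr q =>
          simp only [hM, Matrix.fromBlocks_apply₁₂, Matrix.fromBlocks_apply₂₂, hBc, hu,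
            hDc, hj₀, Matrix.fromBlocks, Matrix.of_apply, Sum.elim_inl, Sum.elim_inr]
      · push_neg at ha
        set ρ' : Fin k ⊕ Fin 1 → Fin m' := Sum.elim ρ (fun _ => a) with hρ'
        set γ' : Fin k ⊕ Fin 1 → ι := Sum.elim γ (fun _ => p) with hγ'
        have hρinj : Function.Injective ρ' := by
          rintro (x | x) (y | y) hxy <;> simp only [hρ', Sum.elim_inl, Sum.elim_inr] at hxy
          · rw [ρ.injective hxy]
          · exact absurd hxy (ha x)
          · exact absurd hxy.symm (ha y)
          · rw [Subsingleton.elim x y]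
        have hγinj : Function.Injective γ' := by
          rintro (x | x) (y | y) hxy <;> simp only [hγ', Sum.elim_inl, Sum.elim_inr] at hxy
          · rw [γ.injective hxy]
          · exact absurd hxy (hp x)
          · exact absurd hxy.symm (hp y)
          · rw [Subsingleton.elim x y]
        have hMsub : M = W.submatrix ρ' γ' := by
          ext (i | i) (q | q) <;>
            simp [hM, hρ', hγ', hBdef, hBc, hCc, hDc, hu,
              Matrix.fromBlocks_apply₁₁, Matrix.fromBlocks_apply₁₂,
              Matrix.fromBlocks_apply₂₁, Matrix.fromBlocks_apply₂₂, Matrix.fromBlocks]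
        have e : Fin (k+1) ≃ Fin k ⊕ Fin 1 := finSumFinEquiv.symm
        have : M.det = (W.submatrix (ρ' ∘ e) (γ' ∘ e)).det := by
          rw [hMsub, ← Matrix.submatrix_submatrix]
          exact (Matrix.det_submatrix_equiv_self e _).symm
        rw [this]
        exact hmax ⟨ρ' ∘ e, hρinj.comp e.injective⟩ ⟨γ' ∘ e, hγinj.comp e.injective⟩
    have hInv : Invertible B := B.invertibleOfIsUnitDet hBunit
    have hSchur := Matrix.det_fromBlocks₁₁ B Bc Cc Dc
    rw [← hM, hMdet] at hSchur
    have hdet1 : (Dc - Cc * ⅟B * Bc).det = 0 := by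
      rcases mul_eq_zero.mp hSchur.symm with h | h
      · exact absurd h hBdet
      · exact h
    rw [Matrix.det_fin_one] at hdet1
    have hWap : W a p = (Cc * ⅟B * Bc) 0 0 := by
      have := hdet1
      rw [Matrix.sub_apply] at this
      simp only [Matrix.sub_apply, hDc] at this
      linarith
    have hBinvB : B * ⅟B = 1 := mul_invOf_self B
    -- u = B * (⅟B * u)
    set t : Fin k → ℝ := (⅟B : Matrix (Fin k) (Fin k) ℝ) *ᵥ u with ht
    have hut : ∀ j, u j = ∑ p', B j p' * t p' := by
      intro j
      have : B *ᵥ t = u := by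
        rw [ht, Matrix.mulVec_mulVec, hBinvB, Matrix.one_mulVec]
      have := congrFun this j
      simp only [Matrix.mulVec, dotProduct] at this
      exact this.symm
    have hrhs : ∑ j, c a j * u j = ∑ p', W a (γ p') * t p' := by
      calc ∑ j, c a j * u j = ∑ j, c a j * ∑ p', B j p' * t p' := by
            refine Finset.sum_congr rfl fun j _ => by rw [← hut j]
        _ = ∑ j, ∑ p', c a j * B j p' * t p' := by
            refine Finset.sum_congr rfl fun j _ => by rw [Finset.mul_sum]; ring_nf
        _ = ∑ p', ∑ j, c a j * B j p' * t p' := Finset.sum_comm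
        _ = ∑ p', (∑ j, c a j * B j p') * t p' := by
            refine Finset.sum_congr rfl fun p' _ => by rw [Finset.sum_mul]
        _ = ∑ p', W a (γ p') * t p' := by
            refine Finset.sum_congr rfl fun p' _ => by rw [hC]
    have hlhs : (Cc * ⅟B * Bc) 0 0 = ∑ p', W a (γ p') * t p' := by
      calc (Cc * ⅟B * Bc) 0 0 = ∑ j, (Cc * ⅟B) 0 j * Bc j 0 := Matrix.mul_apply
        _ = ∑ j, (∑ p', Cc 0 p' * (⅟B : Matrix (Fin k) (Fin k) ℝ) p' j) * u j := by
            refine Finset.sum_congr rfl fun j _ => by rw [Matrix.mul_apply, hBc]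
        _ = ∑ j, ∑ p', Cc 0 p' * (⅟B : Matrix (Fin k) (Fin k) ℝ) p' j * u j := by
            refine Finset.sum_congr rfl fun j _ => by rw [Finset.sum_mul]
        _ = ∑ p', ∑ j, Cc 0 p' * (⅟B : Matrix (Fin k) (Fin k) ℝ) p' j * u j :=
            Finset.sum_comm
        _ = ∑ p', W a (γ p') * t p' := by
            refine Finset.sum_congr rfl fun p' _ => ?_
            rw [ht]
            simp only [Matrix.mulVec, dotProduct, Finset.mul_sum, hCc]
            refine Finset.sum_congr rfl fun j _ => by ring
    rw [hWap, hlhs, hrhs]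

set_option maxHeartbeats 1000000 in
theorem stmt9 {d N n m r : ℕ} (hd : 2 ≤ d) (hN : 2 ≤ N) (hn : 1 ≤ n)
    (v : Fin n → (Fin d → ℤ))
    (hconv : ∀ i, (fun j => ((v i j : ℝ))) ∈
      Set.extremePoints ℝ (convexHull ℝ (Set.range fun i' (j : Fin d) => ((v i' j : ℝ)))))
    (hbound : ∀ i j, |v i j| ≤ (N : ℤ))
    (A : Matrix (Fin m) (Fin d) ℤ) (b : Fin m → ℤ)
    (hA : ∀ i j, |A i j| ≤ (((d + 1) * N) ^ d : ℤ))
    (hb : ∀ i, |b i| ≤ (((d + 1) * N) ^ d : ℤ))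
    (hP : {x : Fin d → ℝ | ∀ i, (A.map (Int.cast : ℤ → ℝ)).mulVec x i ≤ (b i : ℝ)}
        = convexHull ℝ (Set.range fun i' (j : Fin d) => ((v i' j : ℝ))))
    (T : Matrix (Fin m) (Fin r) ℝ) (U : Matrix (Fin r) (Fin n) ℝ)
    (hT : ∀ i ℓ, 0 ≤ T i ℓ) (hU : ∀ ℓ j, 0 ≤ U ℓ j)
    (hfac : ∀ i j, (T * U) i j = (b i : ℝ) - ∑ l, (A i l : ℝ) * (v j l : ℝ)) :
    ∃ (Ab : Matrix (Fin (d + r)) (Fin d) ℤ) (Tb : Matrix (Fin (d + r)) (Fin r) ℝ)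
      (bb : Fin (d + r) → ℤ),
      (∀ i j, ∃ c : ℕ, Tb i j =
        (c : ℝ) / ((4 * r * (d + r) : ℕ) * ((((d + 1) * N) ^ d : ℕ) : ℝ))) ∧
      (∀ i j, |Ab i j| ≤ (((d + 1) * N) ^ d : ℤ)) ∧
      (∀ i, |bb i| ≤ (((d + 1) * N) ^ d : ℤ)) ∧
      (∀ i j, Tb i j ≤ ((((d + 1) * N) ^ d : ℕ) : ℝ)) ∧
      {x : Fin d → ℤ | (fun j => ((x j : ℝ))) ∈
          convexHull ℝ (Set.range fun i' (j : Fin d) => ((v i' j : ℝ)))}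
        = {x : Fin d → ℤ | ∃ y : Fin r → ℝ,
            (∀ j, y j ∈ Set.Icc (0 : ℝ) ((((d + 1) * N) ^ d : ℕ) : ℝ)) ∧
            ∀ i, |∑ l, (Ab i l : ℝ) * (x l : ℝ) + Tb.mulVec y i - (bb i : ℝ)| ≤
              1 / ((4 * (d + r) : ℕ) : ℝ)} := by
  classical
  set Δn : ℕ := ((d + 1) * N) ^ d with hΔn
  set Δr : ℝ := (Δn : ℝ) with hΔr
  have hΔnpos : 0 < Δn := by positivity
  have hΔrpos : (0 : ℝ) < Δr := by rw [hΔr]; exact_mod_cast hΔnpos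
  have hΔbig : (d : ℝ) * N + 1 ≤ Δr := by
    have h1 : d * N + 1 ≤ (d + 1) * N := by nlinarith
    have h2 : (d + 1) * N ≤ ((d + 1) * N) ^ d := by
      calc (d + 1) * N = ((d + 1) * N) ^ 1 := (pow_one _).symm
        _ ≤ ((d + 1) * N) ^ d := Nat.pow_le_pow_right (by nlinarith) (by omega)
    have : d * N + 1 ≤ Δn := le_trans h1 h2
    rw [hΔr]
    exact_mod_cast this
  have hZ : (((d : ℤ) + 1) * (N : ℤ)) ^ d = (Δn : ℤ) := by rw [hΔn]; push_cast; ring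
  have hAcast : ∀ i l, |(A i l : ℝ)| ≤ Δr := by
    intro i l
    have h := hA i l
    rw [hZ] at h
    rw [hΔr, ← Int.cast_abs]
    exact_mod_cast h
  have hbcast : ∀ i, |(b i : ℝ)| ≤ Δr := by
    intro i
    have h := hb i
    rw [hZ] at h
    rw [hΔr, ← Int.cast_abs]
    exact_mod_cast h
  have hvcast : ∀ i j, |(v i j : ℝ)| ≤ (N : ℝ) := by
    intro i j
    rw [← Int.cast_abs]
    exact_mod_cast hbound i j
  -- slack bound
  have hslack : ∀ i j, (b i : ℝ) - ∑ l, (A i l : ℝ) * (v j l : ℝ) ≤ Δr ^ 2 := by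
    intro i j
    have h1 : |∑ l, (A i l : ℝ) * (v j l : ℝ)| ≤ (d : ℝ) * (Δr * N) := by
      calc |∑ l, (A i l : ℝ) * (v j l : ℝ)| ≤ ∑ l, |(A i l : ℝ) * (v j l : ℝ)| :=
            Finset.abs_sum_le_sum_abs _ _
        _ ≤ ∑ _l : Fin d, Δr * (N : ℝ) := by
            refine Finset.sum_le_sum fun l _ => ?_
            rw [abs_mul]
            exact mul_le_mul (hAcast i l) (hvcast j l) (abs_nonneg _)
              (le_of_lt hΔrpos)
        _ = (d : ℝ) * (Δr * N) := by rw [Finset.sum_const, Finset.card_univ]; simp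
    have h2 : (b i : ℝ) ≤ Δr := le_trans (le_abs_self _) (hbcast i)
    nlinarith [abs_nonneg (∑ l, (A i l : ℝ) * (v j l : ℝ)), neg_abs_le (∑ l, (A i l : ℝ) * (v j l : ℝ))]
  -- column scaling
  set MaxT : Fin r → ℝ := fun ℓ =>
    if h : Nonempty (Fin m) then (Finset.univ.sup' (@Finset.univ_nonempty _ _ h) fun i => T i ℓ)
    else 0 with hMaxT
  have hMaxT_ge : ∀ i ℓ, T i ℓ ≤ MaxT ℓ := by
    intro i ℓ
    simp only [hMaxT]
    rw [dif_pos (⟨i⟩ : Nonempty (Fin m))]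
    exact Finset.le_sup' (fun i => T i ℓ) (Finset.mem_univ i)
  have hMaxT_nonneg : ∀ ℓ, 0 ≤ MaxT ℓ := by
    intro ℓ
    simp only [hMaxT]
    by_cases h : Nonempty (Fin m)
    · rw [dif_pos h]
      obtain ⟨i⟩ := h
      exact le_trans (hT i ℓ) (Finset.le_sup' (fun i => T i ℓ) (Finset.mem_univ i))
    · rw [dif_neg h]
  have hMaxT_mul : ∀ ℓ j, MaxT ℓ * U ℓ j ≤ Δr ^ 2 := by
    intro ℓ j
    by_cases h : Nonempty (Fin m)
    · obtain ⟨i₀, -, hi₀⟩ := Finset.exists_mem_eq_sup' (@Finset.univ_nonempty _ _ h)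
        (fun i => T i ℓ)
      have hMeq : MaxT ℓ = T i₀ ℓ := by simp only [hMaxT]; rw [ dif_pos h]; exact hi₀
      have hle : T i₀ ℓ * U ℓ j ≤ ∑ ℓ', T i₀ ℓ' * U ℓ' j := by
        exact Finset.single_le_sum (fun ℓ' _ => mul_nonneg (hT i₀ ℓ') (hU ℓ' j))
          (Finset.mem_univ ℓ)
      have hTU : ∑ ℓ', T i₀ ℓ' * U ℓ' j = (b i₀ : ℝ) - ∑ l, (A i₀ l : ℝ) * (v j l : ℝ) := by
        rw [← hfac i₀ j, Matrix.mul_apply]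
      rw [hMeq]
      calc T i₀ ℓ * U ℓ j ≤ ∑ ℓ', T i₀ ℓ' * U ℓ' j := hle
        _ ≤ Δr ^ 2 := by rw [hTU]; exact hslack i₀ j
    · simp only [hMaxT]; rw [ dif_neg h, zero_mul]
      positivity
  set T' : Matrix (Fin m) (Fin r) ℝ :=
    fun i ℓ => if MaxT ℓ = 0 then 0 else T i ℓ * Δr / MaxT ℓ with hT'
  set U' : Matrix (Fin r) (Fin n) ℝ := fun ℓ j => MaxT ℓ * U ℓ j / Δr with hU'
  have hT'nonneg : ∀ i ℓ, 0 ≤ T' i ℓ := by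
    intro i ℓ
    simp only [hT']
    by_cases h : MaxT ℓ = 0
    · rw [if_pos h]
    · rw [if_neg h]
      exact div_nonneg (mul_nonneg (hT i ℓ) hΔrpos.le) (hMaxT_nonneg ℓ)
  have hT'le : ∀ i ℓ, T' i ℓ ≤ Δr := by
    intro i ℓ
    simp only [hT']
    by_cases h : MaxT ℓ = 0
    · rw [if_pos h]; exact le_of_lt hΔrpos
    · rw [if_neg h]
      have hM : 0 < MaxT ℓ := lt_of_le_of_ne (hMaxT_nonneg ℓ) (Ne.symm h)
      rw [div_le_iff₀ hM]
      have := hMaxT_ge i ℓ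
      nlinarith
  have hU'mem : ∀ ℓ j, U' ℓ j ∈ Set.Icc (0 : ℝ) Δr := by
    intro ℓ j
    constructor
    · simp only [hU']
      have := hMaxT_nonneg ℓ
      have := hU ℓ j
      positivity
    · simp only [hU']
      rw [div_le_iff₀ hΔrpos]
      have := hMaxT_mul ℓ j
      nlinarith
  have hprod : ∀ i ℓ j, T' i ℓ * U' ℓ j = T i ℓ * U ℓ j := by
    intro i ℓ j
    simp only [hT']; rw [ hU']
    by_cases h : MaxT ℓ = 0
    · rw [if_pos h]
      have hTz : T i ℓ = 0 := le_antisymm (h ▸ hMaxT_ge i ℓ) (hT i ℓ)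
      rw [hTz, zero_mul, zero_mul]
    · rw [if_neg h]
      field_simp
  -- the combined matrix and row basis
  set W : Matrix (Fin m) (Fin d ⊕ Fin r) ℝ :=
    fun i => Sum.elim (fun l => (A i l : ℝ)) (fun ℓ => T' i ℓ) with hW
  obtain ⟨k, hkcard, ρ, c, hcabs, hcomb⟩ := exists_bounded_row_comb W
  have hk' : k ≤ d + r := by simpa using hkcard
  -- exact satisfiability for points of the hull
  have hsat : ∀ x : Fin d → ℝ,
      x ∈ convexHull ℝ (Set.range fun i' (j : Fin d) => ((v i' j : ℝ))) →
      ∃ y : Fin r → ℝ, (∀ ℓ, y ℓ ∈ Set.Icc (0 : ℝ) Δr) ∧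
        ∀ i : Fin m, (∑ l, (A i l : ℝ) * x l) + (∑ ℓ, T' i ℓ * y ℓ) = (b i : ℝ) := by
    intro x hx
    rw [mem_convexHull_iff_exists_fintype] at hx
    obtain ⟨ι, hι, w, z, hw0, hw1, hzmem, hzx⟩ := hx
    choose g hg using hzmem
    refine ⟨fun ℓ => ∑ t, w t * U' ℓ (g t), ?_, ?_⟩
    · intro ℓ
      constructor
      · exact Finset.sum_nonneg fun t _ => mul_nonneg (hw0 t) (hU'mem ℓ (g t)).1
      · calc ∑ t, w t * U' ℓ (g t) ≤ ∑ t, w t * Δr :=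
              Finset.sum_le_sum fun t _ => mul_le_mul_of_nonneg_left
                (hU'mem ℓ (g t)).2 (hw0 t)
          _ = Δr := by rw [← Finset.sum_mul, hw1, one_mul]
    · intro i
      have hxl : ∀ l, x l = ∑ t, w t * (v (g t) l : ℝ) := by
        intro l
        rw [← hzx, Finset.sum_apply]
        refine Finset.sum_congr rfl fun t _ => ?_
        rw [Pi.smul_apply, smul_eq_mul, ← hg t]
      have key : ∀ t, (∑ l, (A i l : ℝ) * (v (g t) l : ℝ))
          + (∑ ℓ, T' i ℓ * U' ℓ (g t)) = (b i : ℝ) := by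
        intro t
        have h1 : ∑ ℓ, T' i ℓ * U' ℓ (g t) = (T * U) i (g t) := by
          rw [Matrix.mul_apply]
          exact Finset.sum_congr rfl fun ℓ _ => hprod i ℓ (g t)
        rw [h1, hfac]
        ring
      have e1 : ∑ l, (A i l : ℝ) * x l
          = ∑ t, w t * ∑ l, (A i l : ℝ) * (v (g t) l : ℝ) := by
        calc ∑ l, (A i l : ℝ) * x l
            = ∑ l, ∑ t, w t * ((A i l : ℝ) * (v (g t) l : ℝ)) := by
              refine Finset.sum_congr rfl fun l _ => ?_
              rw [hxl l, Finset.mul_sum]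
              refine Finset.sum_congr rfl fun t _ => by ring
          _ = ∑ t, ∑ l, w t * ((A i l : ℝ) * (v (g t) l : ℝ)) := Finset.sum_comm
          _ = ∑ t, w t * ∑ l, (A i l : ℝ) * (v (g t) l : ℝ) := by
              refine Finset.sum_congr rfl fun t _ => by rw [Finset.mul_sum]
      have e2 : ∑ ℓ, T' i ℓ * (∑ t, w t * U' ℓ (g t))
          = ∑ t, w t * ∑ ℓ, T' i ℓ * U' ℓ (g t) := by
        calc ∑ ℓ, T' i ℓ * (∑ t, w t * U' ℓ (g t))
            = ∑ ℓ, ∑ t, w t * (T' i ℓ * U' ℓ (g t)) := by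
              refine Finset.sum_congr rfl fun ℓ _ => ?_
              rw [Finset.mul_sum]
              refine Finset.sum_congr rfl fun t _ => by ring
          _ = ∑ t, ∑ ℓ, w t * (T' i ℓ * U' ℓ (g t)) := Finset.sum_comm
          _ = ∑ t, w t * ∑ ℓ, T' i ℓ * U' ℓ (g t) := by
              refine Finset.sum_congr rfl fun t _ => by rw [Finset.mul_sum]
      rw [e1, e2, ← Finset.sum_add_distrib]
      calc ∑ t, (w t * ∑ l, (A i l : ℝ) * (v (g t) l : ℝ)
              + w t * ∑ ℓ, T' i ℓ * U' ℓ (g t))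
          = ∑ t, w t * (b i : ℝ) := by
            refine Finset.sum_congr rfl fun t _ => ?_
            rw [← mul_add, key t]
        _ = (b i : ℝ) := by rw [← Finset.sum_mul, hw1, one_mul]
  -- definitions of the rounded system
  set D : ℝ := ((4 * r * (d + r) : ℕ) : ℝ) * Δr with hD
  have hDpos : 0 < r → 0 < D := by
    intro hr
    rw [hD]
    have : 0 < 4 * r * (d + r) := by positivity
    have : (0:ℝ) < ((4 * r * (d + r) : ℕ) : ℝ) := by exact_mod_cast this
    positivity
  set Ab : Matrix (Fin (d + r)) (Fin d) ℤ :=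
    fun i l => if h : (i : ℕ) < k then A (ρ ⟨i, h⟩) l else 0 with hAb
  set bb : Fin (d + r) → ℤ :=
    fun i => if h : (i : ℕ) < k then b (ρ ⟨i, h⟩) else 0 with hbb
  set Tb : Matrix (Fin (d + r)) (Fin r) ℝ :=
    fun i ℓ => if h : (i : ℕ) < k then ((⌊T' (ρ ⟨i, h⟩) ℓ * D⌋).toNat : ℝ) / D else 0
    with hTb
  have hTb_le : ∀ (i : Fin (d + r)) (ℓ : Fin r) (h : (i : ℕ) < k), Tb i ℓ ≤ T' (ρ ⟨i, h⟩) ℓ := by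
    intro i ℓ h
    have hDp : 0 < D := hDpos ℓ.pos
    simp only [hTb]
    rw [dif_pos h]
    have h0 : (0:ℝ) ≤ T' (ρ ⟨i, h⟩) ℓ * D := mul_nonneg (hT'nonneg _ _) hDp.le
    have hfl : ((⌊T' (ρ ⟨i, h⟩) ℓ * D⌋).toNat : ℝ) = ((⌊T' (ρ ⟨i, h⟩) ℓ * D⌋ : ℤ) : ℝ) := by
      exact_mod_cast Int.toNat_of_nonneg (Int.floor_nonneg.mpr h0)
    rw [hfl, div_le_iff₀ hDp]
    exact Int.floor_le _
  have hTb_ge : ∀ (i : Fin (d + r)) (ℓ : Fin r) (h : (i : ℕ) < k), T' (ρ ⟨i, h⟩) ℓ - 1 / D ≤ Tb i ℓ := by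
    intro i ℓ h
    have hDp : 0 < D := hDpos ℓ.pos
    simp only [hTb]
    rw [dif_pos h]
    have h0 : (0:ℝ) ≤ T' (ρ ⟨i, h⟩) ℓ * D := mul_nonneg (hT'nonneg _ _) hDp.le
    have hfl : ((⌊T' (ρ ⟨i, h⟩) ℓ * D⌋).toNat : ℝ) = ((⌊T' (ρ ⟨i, h⟩) ℓ * D⌋ : ℤ) : ℝ) := by
      exact_mod_cast Int.toNat_of_nonneg (Int.floor_nonneg.mpr h0)
    rw [hfl, le_div_iff₀ hDp]
    have h1 := Int.sub_one_lt_floor (T' (ρ ⟨i, h⟩) ℓ * D)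
    have hDD : (1 / D) * D = 1 := by field_simp
    nlinarith [h1, hDD]
  have hTb_nonneg : ∀ i ℓ, 0 ≤ Tb i ℓ := by
    intro i ℓ
    have hDp : 0 < D := hDpos ℓ.pos
    simp only [hTb]
    by_cases h : (i : ℕ) < k
    · rw [dif_pos h]
      positivity
    · rw [dif_neg h]
  refine ⟨Ab, Tb, bb, ?_, ?_, ?_, ?_, ?_⟩
  · -- multiples
    intro i ℓ
    simp only [hTb]
    by_cases h : (i : ℕ) < k
    · exact ⟨(⌊T' (ρ ⟨i, h⟩) ℓ * D⌋).toNat, by rw [dif_pos h, hD]⟩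
    · exact ⟨0, by rw [dif_neg h]; simp⟩
  · intro i l
    simp only [hAb]
    by_cases h : (i : ℕ) < k
    · rw [dif_pos h]; exact hA _ l
    · rw [dif_neg h]; simp only [abs_zero]; positivity
  · intro i
    simp only [hbb]
    by_cases h : (i : ℕ) < k
    · rw [dif_pos h]; exact hb _
    · rw [dif_neg h]; simp only [abs_zero]; positivity
  · intro i ℓ
    by_cases h : (i : ℕ) < k
    · exact le_trans (hTb_le i ℓ h) (hT'le _ ℓ)
    · simp only [hTb]; rw [ dif_neg h]; exact le_of_lt hΔrpos
  · -- the set equality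
    have hdrpos : (0:ℝ) < ((4 * (d + r) : ℕ) : ℝ) := by
      have : 0 < 4 * (d + r) := by omega
      exact_mod_cast this
    have hcast4 : ((4 * (d + r) : ℕ) : ℝ) = 4 * ((d : ℝ) + (r : ℝ)) := by push_cast; ring
    have hmv : ∀ (y : Fin r → ℝ) (i : Fin (d + r)), Tb.mulVec y i = ∑ ℓ, Tb i ℓ * y ℓ := by
      intro y i
      rfl
    -- rounding error bound
    have hround : ∀ (y : Fin r → ℝ), (∀ ℓ, y ℓ ∈ Set.Icc (0:ℝ) Δr) →
        ∀ (i : Fin (d + r)) (h : (i : ℕ) < k),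
        |∑ ℓ, (Tb i ℓ - T' (ρ ⟨i, h⟩) ℓ) * y ℓ| ≤ 1 / ((4 * (d + r) : ℕ) : ℝ) := by
      intro y hy i h
      have hper : ∀ ℓ : Fin r, |(Tb i ℓ - T' (ρ ⟨i, h⟩) ℓ) * y ℓ| ≤ (1 / D) * Δr := by
        intro ℓ
        have hDp := hDpos ℓ.pos
        rw [abs_mul]
        have h1 : |Tb i ℓ - T' (ρ ⟨i, h⟩) ℓ| ≤ 1 / D := by
          rw [abs_le]
          constructor
          · linarith [hTb_ge i ℓ h]
          · have h2 := hTb_le i ℓ h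
            have : (0:ℝ) ≤ 1 / D := by positivity
            linarith
        have h2 : |y ℓ| ≤ Δr := by
          rw [abs_le]
          exact ⟨by linarith [(hy ℓ).1], (hy ℓ).2⟩
        exact mul_le_mul h1 h2 (abs_nonneg _) (by positivity)
      calc |∑ ℓ, (Tb i ℓ - T' (ρ ⟨i, h⟩) ℓ) * y ℓ|
          ≤ ∑ ℓ, |(Tb i ℓ - T' (ρ ⟨i, h⟩) ℓ) * y ℓ| := Finset.abs_sum_le_sum_abs _ _
        _ ≤ ∑ _ℓ : Fin r, (1 / D) * Δr := Finset.sum_le_sum fun ℓ _ => hper ℓ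
        _ = (r : ℝ) * ((1 / D) * Δr) := by
            rw [Finset.sum_const, Finset.card_univ, Fintype.card_fin, nsmul_eq_mul]
        _ ≤ 1 / ((4 * (d + r) : ℕ) : ℝ) := by
            rcases Nat.eq_zero_or_pos r with hr | hr
            · subst hr
              simp only [Nat.cast_zero, zero_mul]
              positivity
            · have hDp := hDpos hr
              have hrpos : (0:ℝ) < (r:ℝ) := by exact_mod_cast hr
              have hdr : (0:ℝ) < (d:ℝ) + (r:ℝ) := by positivity
              have hDval : D = 4 * (r:ℝ) * ((d:ℝ) + (r:ℝ)) * Δr := by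
                rw [hD]; push_cast; ring
              rw [hcast4, hDval]
              rw [show (r:ℝ) * (1 / (4 * (r:ℝ) * ((d:ℝ) + (r:ℝ)) * Δr) * Δr)
                  = 1 / (4 * ((d:ℝ) + (r:ℝ))) from by field_simp]
    -- row combination applied to any vector
    have hswap : ∀ (a : Fin m) (zz : Fin d ⊕ Fin r → ℝ),
        ∑ p, W a p * zz p = ∑ j, c a j * ∑ p, W (ρ j) p * zz p := by
      intro a zz
      calc ∑ p, W a p * zz p = ∑ p, (∑ j, c a j * W (ρ j) p) * zz p :=
            Finset.sum_congr rfl fun p _ => by rw [← hcomb a p]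
        _ = ∑ p, ∑ j, c a j * W (ρ j) p * zz p :=
            Finset.sum_congr rfl fun p _ => by rw [Finset.sum_mul]
        _ = ∑ j, ∑ p, c a j * W (ρ j) p * zz p := Finset.sum_comm
        _ = ∑ j, c a j * ∑ p, W (ρ j) p * zz p := by
            refine Finset.sum_congr rfl fun j _ => ?_
            rw [Finset.mul_sum]
            exact Finset.sum_congr rfl fun p _ => by ring
    ext x
    simp only [Set.mem_setOf_eq]
    constructor
    · intro hx
      obtain ⟨y, hy, hexact⟩ := hsat _ hx
      refine ⟨y, hy, ?_⟩
      intro i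
      by_cases h : (i : ℕ) < k
      · have hex := hexact (ρ ⟨i, h⟩)
        have hAbi : ∀ l, Ab i l = A (ρ ⟨i, h⟩) l := fun l => by
          simp only [hAb]; rw [dif_pos h]
        have hbbi : bb i = b (ρ ⟨i, h⟩) := by simp only [hbb]; rw [dif_pos h]
        have hsplit : ∑ l, (Ab i l : ℝ) * (x l : ℝ) + Tb.mulVec y i - (bb i : ℝ)
            = ∑ ℓ, (Tb i ℓ - T' (ρ ⟨i, h⟩) ℓ) * y ℓ := by
          rw [hmv, hbbi]
          have e1 : ∑ l, (Ab i l : ℝ) * (x l : ℝ)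
              = ∑ l, (A (ρ ⟨i, h⟩) l : ℝ) * (x l : ℝ) :=
            Finset.sum_congr rfl fun l _ => by rw [hAbi l]
          have e2 : ∑ ℓ, Tb i ℓ * y ℓ = ∑ ℓ, T' (ρ ⟨i, h⟩) ℓ * y ℓ
              + ∑ ℓ, (Tb i ℓ - T' (ρ ⟨i, h⟩) ℓ) * y ℓ := by
            rw [← Finset.sum_add_distrib]
            exact Finset.sum_congr rfl fun ℓ _ => by ring
          rw [e1, e2]
          linarith [hex]
        rw [hsplit]
        exact hround y hy i h
      · have hAbi : ∀ l, Ab i l = 0 := fun l => by simp only [hAb]; rw [dif_neg h]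
        have hbbi : bb i = 0 := by simp only [hbb]; rw [dif_neg h]
        have hTbi : ∀ ℓ, Tb i ℓ = 0 := fun ℓ => by simp only [hTb]; rw [dif_neg h]
        have hzero : ∑ l, (Ab i l : ℝ) * (x l : ℝ) + Tb.mulVec y i - (bb i : ℝ) = 0 := by
          rw [hmv, hbbi]
          have e1 : ∑ l, (Ab i l : ℝ) * (x l : ℝ) = 0 :=
            Finset.sum_eq_zero fun l _ => by rw [hAbi l]; simp
          have e2 : ∑ ℓ, Tb i ℓ * y ℓ = 0 :=
            Finset.sum_eq_zero fun ℓ _ => by rw [hTbi ℓ]; simp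
          rw [e1, e2]
          simp
        rw [hzero, abs_zero]
        positivity
    · rintro ⟨y, hy, hrows⟩
      have hv0 : (fun j => ((v ⟨0, hn⟩ j : ℝ))) ∈
          convexHull ℝ (Set.range fun i' (j : Fin d) => ((v i' j : ℝ))) :=
        subset_convexHull _ _ ⟨⟨0, hn⟩, rfl⟩
      obtain ⟨y₀, hy₀, hex₀⟩ := hsat _ hv0
      set z₀ : Fin d ⊕ Fin r → ℝ := Sum.elim (fun l => ((v ⟨0, hn⟩ l : ℤ) : ℝ)) y₀ with hz₀
      have hWz₀ : ∀ a : Fin m, ∑ p, W a p * z₀ p = (b a : ℝ) := by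
        intro a
        rw [Fintype.sum_sum_type]
        simp only [hW, hz₀, Sum.elim_inl, Sum.elim_inr]
        exact hex₀ a
      have hbcomb : ∀ a : Fin m, (b a : ℝ) = ∑ j, c a j * (b (ρ j) : ℝ) := by
        intro a
        rw [← hWz₀ a, hswap a z₀]
        exact Finset.sum_congr rfl fun j _ => by rw [hWz₀]
      set z : Fin d ⊕ Fin r → ℝ := Sum.elim (fun l => ((x l : ℤ) : ℝ)) y with hz
      have hrowk : ∀ j : Fin k, |∑ p, W (ρ j) p * z p - (b (ρ j) : ℝ)|
          ≤ 2 * (1 / ((4 * (d + r) : ℕ) : ℝ)) := by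
        intro j
        have hjlt : (j : ℕ) < d + r := lt_of_lt_of_le j.isLt hk'
        set i : Fin (d + r) := ⟨(j : ℕ), hjlt⟩ with hi
        have hjk : (i : ℕ) < k := j.isLt
        have hρ : ρ ⟨(i : ℕ), hjk⟩ = ρ j := by
          congr 1
        have hAbi : ∀ l, Ab i l = A (ρ j) l := fun l => by
          simp only [hAb]; rw [dif_pos hjk, hρ]
        have hbbi : bb i = b (ρ j) := by simp only [hbb]; rw [dif_pos hjk, hρ]
        have hsecond : |∑ ℓ, (T' (ρ j) ℓ - Tb i ℓ) * y ℓ|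
            ≤ 1 / ((4 * (d + r) : ℕ) : ℝ) := by
          have hneg : ∑ ℓ, (T' (ρ j) ℓ - Tb i ℓ) * y ℓ
              = -(∑ ℓ, (Tb i ℓ - T' (ρ ⟨(i : ℕ), hjk⟩) ℓ) * y ℓ) := by
            rw [← Finset.sum_neg_distrib]
            exact Finset.sum_congr rfl fun ℓ _ => by rw [hρ]; ring
          rw [hneg, abs_neg]
          exact hround y hy i hjk
        have hs : ∑ p, W (ρ j) p * z p - (b (ρ j) : ℝ)
            = (∑ l, (Ab i l : ℝ) * (x l : ℝ) + Tb.mulVec y i - (bb i : ℝ))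
              + (∑ ℓ, (T' (ρ j) ℓ - Tb i ℓ) * y ℓ) := by
          rw [hmv, Fintype.sum_sum_type, hbbi]
          simp only [hW, hz, Sum.elim_inl, Sum.elim_inr]
          have e1 : ∑ l, (Ab i l : ℝ) * (x l : ℝ)
              = ∑ l, (A (ρ j) l : ℝ) * (x l : ℝ) :=
            Finset.sum_congr rfl fun l _ => by rw [hAbi l]
          have e2 : ∑ ℓ, (T' (ρ j) ℓ - Tb i ℓ) * y ℓ
              = ∑ ℓ, T' (ρ j) ℓ * y ℓ - ∑ ℓ, Tb i ℓ * y ℓ := by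
            rw [← Finset.sum_sub_distrib]
            exact Finset.sum_congr rfl fun ℓ _ => by ring
          rw [e1, e2]
          ring
        calc |∑ p, W (ρ j) p * z p - (b (ρ j) : ℝ)|
            ≤ |∑ l, (Ab i l : ℝ) * (x l : ℝ) + Tb.mulVec y i - (bb i : ℝ)|
              + |∑ ℓ, (T' (ρ j) ℓ - Tb i ℓ) * y ℓ| := by rw [hs]; exact abs_add_le _ _
          _ ≤ 1 / ((4 * (d + r) : ℕ) : ℝ) + 1 / ((4 * (d + r) : ℕ) : ℝ) :=
              add_le_add (hrows i) hsecond
          _ = 2 * (1 / ((4 * (d + r) : ℕ) : ℝ)) := by ring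
      have hall : ∀ a : Fin m, |∑ p, W a p * z p - (b a : ℝ)| ≤ 1 / 2 := by
        intro a
        have hdecomp : ∑ p, W a p * z p - (b a : ℝ)
            = ∑ j, c a j * (∑ p, W (ρ j) p * z p - (b (ρ j) : ℝ)) := by
          rw [hswap a z, hbcomb a, ← Finset.sum_sub_distrib]
          exact Finset.sum_congr rfl fun j _ => by ring
        rw [hdecomp]
        calc |∑ j, c a j * (∑ p, W (ρ j) p * z p - (b (ρ j) : ℝ))|
            ≤ ∑ j, |c a j * (∑ p, W (ρ j) p * z p - (b (ρ j) : ℝ))| :=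
              Finset.abs_sum_le_sum_abs _ _
          _ ≤ ∑ _j : Fin k, 1 * (2 * (1 / ((4 * (d + r) : ℕ) : ℝ))) := by
              refine Finset.sum_le_sum fun j _ => ?_
              rw [abs_mul]
              exact mul_le_mul (hcabs a j) (hrowk j) (abs_nonneg _) zero_le_one
          _ = (k : ℝ) * (2 * (1 / ((4 * (d + r) : ℕ) : ℝ))) := by
              rw [Finset.sum_const, Finset.card_univ, Fintype.card_fin, nsmul_eq_mul]
              ring
          _ ≤ ((d + r : ℕ) : ℝ) * (2 * (1 / ((4 * (d + r) : ℕ) : ℝ))) := by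
              refine mul_le_mul_of_nonneg_right ?_ (by positivity)
              exact_mod_cast hk'
          _ = 1 / 2 := by
              rw [hcast4]
              have hdr : (0:ℝ) < (d:ℝ) + (r:ℝ) := by
                have : (0:ℝ) < (d:ℝ) := by exact_mod_cast (by omega : 0 < d)
                positivity
              push_cast
              field_simp
              ring
      rw [← hP]
      simp only [Set.mem_setOf_eq]
      intro a
      have hWsum : ∑ p, W a p * z p
          = (∑ l, (A a l : ℝ) * (x l : ℝ)) + ∑ ℓ, T' a ℓ * y ℓ := by
        rw [Fintype.sum_sum_type]
        simp only [hW, hz, Sum.elim_inl, Sum.elim_inr]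
      have hTy : 0 ≤ ∑ ℓ, T' a ℓ * y ℓ :=
        Finset.sum_nonneg fun ℓ _ => mul_nonneg (hT'nonneg a ℓ) (hy ℓ).1
      have habs := (abs_le.mp (hall a)).2
      rw [hWsum] at habs
      have hub : ∑ l, (A a l : ℝ) * (x l : ℝ) ≤ (b a : ℝ) + 1 / 2 := by linarith
      have hcastsum : ((∑ l, A a l * x l : ℤ) : ℝ) = ∑ l, (A a l : ℝ) * (x l : ℝ) := by
        push_cast
        rfl
      have hint : (∑ l, A a l * x l) ≤ b a := by
        by_contra hcon
        push_neg at hcon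
        have h1 : b a + 1 ≤ ∑ l, A a l * x l := Int.add_one_le_iff.mpr hcon
        have h2 : ((b a : ℤ) : ℝ) + 1 ≤ ((∑ l, A a l * x l : ℤ) : ℝ) := by
          exact_mod_cast h1
        rw [hcastsum] at h2
        linarith
      have hmvA : (A.map (Int.cast : ℤ → ℝ)).mulVec (fun j => ((x j : ℤ) : ℝ)) a
          = ∑ l, (A a l : ℝ) * (x l : ℝ) := by
        simp [Matrix.mulVec, dotProduct, Matrix.map_apply]
      rw [hmvA, ← hcastsum]
      exact_mod_cast hint
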